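/- A finitely generated group Γ, equipped with the word metric associated with a finite generating set S, has exponential growth (i.e., limsup_{l→∞} (1/l) log |B(e,l)| > 0, where B(e,l) is the ball of radius l around the identity in the word metric) if and only if its coarse entropy is infinite: h_∞(Γ, d_S) = ∞. -/

import Mathlib

open Filter Set Metric
open scoped ENNReal
open scoped Pointwise

noncomputable section

/-- `p` represents a `δ`-pseudoorbit of `f` of length `n` starting at `x₀`:
`(p 0, p 1, …, p n)` with `p 0 = x₀` and `dist (f (p i)) (p (i+1)) ≤ δ` for `i < n`.
(Only the values `p 0, …, p n` are relevant.) -/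
def IsPseudoOrbit {X : Type*} [MetricSpace X] (f : X → X) (δ : ℝ) (n : ℕ) (x₀ : X)
    (p : ℕ → X) : Prop :=
  p 0 = x₀ ∧ ∀ i < n, dist (f (p i)) (p (i + 1)) ≤ δ

/-- The distance between two pseudoorbits of length `n`:
the maximum of `dist (p i) (q i)` over `0 ≤ i ≤ n`. -/
def orbitDist {X : Type*} [MetricSpace X] (n : ℕ) (p q : ℕ → X) : ℝ :=
  (Finset.range (n + 1)).sup' (by simp) fun i => dist (p i) (q i)

/-- A family `S` of pseudoorbits of length `n` is `R`-separated if any two distinct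
members are at pseudoorbit distance at least `R`. -/
def IsSepFamily {X : Type*} [MetricSpace X] (n : ℕ) (R : ℝ) (S : Set (ℕ → X)) : Prop :=
  ∀ p ∈ S, ∀ q ∈ S, p ≠ q → R ≤ orbitDist n p q

/-- `sepCard f n R δ x₀` is `s(f,n,R,δ,x₀)`: the supremum of cardinalities of
`R`-separated sets of `δ`-pseudoorbits of `f` of length `n` starting at `x₀`. -/
def sepCard {X : Type*} [MetricSpace X] (f : X → X) (n : ℕ) (R δ : ℝ) (x₀ : X) : ℝ≥0∞ :=
  ⨆ (S : Set (ℕ → X)) (_ : ∀ p ∈ S, IsPseudoOrbit f δ n x₀ p) (_ : IsSepFamily n R S),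
    (S.encard : ℝ≥0∞)

/-- Extended logarithm `[0,∞] → [0,∞]` (negative values are truncated to `0`). -/
def elog (x : ℝ≥0∞) : ℝ≥0∞ :=
  if x = ⊤ then ⊤ else ENNReal.ofReal (Real.log x.toReal)

/-- The coarse entropy of `f : X → X` computed at the basepoint `x₀`:
`h_∞(f) = lim_{δ→∞} lim_{R→∞} limsup_{n→∞} (1/n) log s(f,n,R,δ,x₀)`.
Since `s` is nondecreasing in `δ` and nonincreasing in `R`, the limits in `δ` and `R`
are the supremum over `δ > 0` and the infimum over `R > 0`, respectively. -/
def coarseEntropyAt {X : Type*} [MetricSpace X] (f : X → X) (x₀ : X) : ℝ≥0∞ :=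
  ⨆ (δ : ℝ) (_ : 0 < δ), ⨅ (R : ℝ) (_ : 0 < R),
    Filter.atTop.limsup fun n : ℕ => elog (sepCard f n R δ x₀) / (n : ℝ≥0∞)

end

/-- The word metric associated with a generating set `S`: `wordDist S g h` is the
minimal `n` such that `g⁻¹ * h` is a product of `n` elements of `S ∪ S⁻¹`
(equivalently, the path metric of the Cayley graph `Cay(Γ,S)`). -/
noncomputable def wordDist {Γ : Type*} [Group Γ] (S : Set Γ) (g h : Γ) : ℕ :=
  sInf {n : ℕ | ∃ l : List Γ, l.length = n ∧ (∀ x ∈ l, x ∈ S ∨ x⁻¹ ∈ S) ∧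
    g⁻¹ * h = l.prod}


section Basic
variable {Γ : Type*} [Group Γ] [MetricSpace Γ] {S : Finset Γ}
  (hgen : Subgroup.closure (S : Set Γ) = ⊤)
  (hdist : ∀ g h : Γ, dist g h = (wordDist (S : Set Γ) g h : ℝ))
include hgen hdist
set_option linter.unusedSectionVars false

/-- every element is a product of generators -/
theorem exists_list (g : Γ) : ∃ l : List Γ,
    (∀ x ∈ l, x ∈ (S : Set Γ) ∨ x⁻¹ ∈ (S : Set Γ)) ∧ l.prod = g := by
  have hg : g ∈ Submonoid.closure ((S : Set Γ) ∪ (S : Set Γ)⁻¹) := by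
    rw [← Subgroup.closure_toSubmonoid, hgen]; trivial
  obtain ⟨l, hl, hprod⟩ := Submonoid.exists_list_of_mem_closure hg
  exact ⟨l, fun x hx => by
    rcases hl x hx with h | h
    · exact Or.inl h
    · exact Or.inr (Set.mem_inv.mp h), hprod⟩

theorem wd_set_nonempty (g h : Γ) :
    {n : ℕ | ∃ l : List Γ, l.length = n ∧ (∀ x ∈ l, x ∈ (S : Set Γ) ∨ x⁻¹ ∈ (S : Set Γ)) ∧
      g⁻¹ * h = l.prod}.Nonempty := by
  obtain ⟨l, hl, hprod⟩ := exists_list hgen hdist (g⁻¹ * h)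
  exact ⟨l.length, l, rfl, hl, hprod.symm⟩

theorem exists_min_list (g h : Γ) : ∃ l : List Γ,
    l.length = wordDist (S : Set Γ) g h ∧
    (∀ x ∈ l, x ∈ (S : Set Γ) ∨ x⁻¹ ∈ (S : Set Γ)) ∧ g⁻¹ * h = l.prod := by
  have := Nat.sInf_mem (wd_set_nonempty hgen hdist g h)
  obtain ⟨l, h1, h2, h3⟩ := this
  exact ⟨l, h1, h2, h3⟩

theorem wordDist_le_of_list {g h : Γ} {l : List Γ}
    (hl : ∀ x ∈ l, x ∈ (S : Set Γ) ∨ x⁻¹ ∈ (S : Set Γ)) (hprod : g⁻¹ * h = l.prod) :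
    wordDist (S : Set Γ) g h ≤ l.length :=
  Nat.sInf_le ⟨l, rfl, hl, hprod⟩

theorem dist_le_of_list {g h : Γ} {l : List Γ}
    (hl : ∀ x ∈ l, x ∈ (S : Set Γ) ∨ x⁻¹ ∈ (S : Set Γ)) (hprod : g⁻¹ * h = l.prod) :
    dist g h ≤ (l.length : ℝ) := by
  rw [hdist]; exact_mod_cast wordDist_le_of_list hgen hdist hl hprod

theorem dist_mul_left' (a g h : Γ) : dist (a * g) (a * h) = dist g h := by
  rw [hdist, hdist]
  norm_cast
  have key : (a * g)⁻¹ * (a * h) = g⁻¹ * h := by group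
  unfold wordDist
  rw [key]

theorem exists_min_list_one (g : Γ) : ∃ l : List Γ,
    (l.length : ℝ) = dist (1 : Γ) g ∧
    (∀ x ∈ l, x ∈ (S : Set Γ) ∨ x⁻¹ ∈ (S : Set Γ)) ∧ g = l.prod := by
  obtain ⟨l, h1, h2, h3⟩ := exists_min_list hgen hdist (1 : Γ) g
  exact ⟨l, by rw [hdist]; exact_mod_cast h1, h2, by simpa using h3⟩

end Basic

open Filter Set Metric
open scoped ENNReal
open scoped Pointwise

section Count
variable {Γ : Type*}

theorem ncard_prod' (P Q : Set Γ) : (P ×ˢ Q).ncard = P.ncard * Q.ncard := by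
  rw [← Nat.card_coe_set_eq, ← Nat.card_coe_set_eq, ← Nat.card_coe_set_eq,
    Nat.card_congr (Equiv.Set.prod P Q), Nat.card_prod]

theorem ncard_le_mul [Group Γ] {B P Q : Set Γ} (hP : P.Finite) (hQ : Q.Finite) (f : Γ → Γ)
    (h1 : ∀ b ∈ B, f b ∈ P) (h2 : ∀ b ∈ B, (f b)⁻¹ * b ∈ Q) :
    B.ncard ≤ P.ncard * Q.ncard := by
  set F : Γ → Γ × Γ := fun b => (f b, (f b)⁻¹ * b) with hF
  have hinj : Set.InjOn F B := by
    intro b hb b' hb' he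
    have h1' : f b = f b' := congrArg Prod.fst he
    have h2' : (f b)⁻¹ * b = (f b')⁻¹ * b' := congrArg Prod.snd he
    calc b = f b * ((f b)⁻¹ * b) := by group
    _ = f b' * ((f b')⁻¹ * b') := by rw [h2', h1']
    _ = b' := by group
  have himg : F '' B ⊆ P ×ˢ Q := by
    rintro _ ⟨b, hb, rfl⟩
    exact ⟨h1 b hb, h2 b hb⟩
  calc B.ncard = (F '' B).ncard := (Set.ncard_image_of_injOn hinj).symm
  _ ≤ (P ×ˢ Q).ncard := Set.ncard_le_ncard himg (hP.prod hQ)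
  _ = P.ncard * Q.ncard := ncard_prod' P Q
end Count

section Balls
variable {Γ : Type*} [Group Γ] [MetricSpace Γ] {S : Finset Γ}
  (hgen : Subgroup.closure (S : Set Γ) = ⊤)
  (hdist : ∀ g h : Γ, dist g h = (wordDist (S : Set Γ) g h : ℝ))
include hgen hdist
set_option linter.unusedSectionVars false

theorem dist_one_prod_le {l : List Γ}
    (hl : ∀ x ∈ l, x ∈ (S : Set Γ) ∨ x⁻¹ ∈ (S : Set Γ)) :
    dist (1 : Γ) l.prod ≤ (l.length : ℝ) :=
  dist_le_of_list hgen hdist hl (by rw [inv_one, one_mul])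

theorem ball_finite_nat : ∀ n : ℕ, (closedBall (1 : Γ) (n : ℝ)).Finite := by
  intro n
  induction n with
  | zero =>
    apply Set.Finite.subset (Set.finite_singleton (1 : Γ))
    intro g hg
    simp only [mem_closedBall, Nat.cast_zero] at hg
    have : dist g 1 = 0 := le_antisymm hg dist_nonneg
    simp [dist_eq_zero.mp this]
  | succ n ih =>
    have hGfin : ((S : Set Γ) ∪ (S : Set Γ)⁻¹ ∪ {1}).Finite :=
      ((S.finite_toSet.union S.finite_toSet.inv).union (Set.finite_singleton 1))
    apply Set.Finite.subset (Set.Finite.mul ih hGfin)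
    intro g hg
    simp only [mem_closedBall] at hg
    obtain ⟨l, hlen, hl, hprod⟩ := exists_min_list_one hgen hdist g
    have hlenle : l.length ≤ n + 1 := by
      have : (l.length : ℝ) ≤ (n : ℝ) + 1 := by
        rw [hlen, dist_comm]; exact_mod_cast hg
      exact_mod_cast this
    rcases l.eq_nil_or_concat with rfl | ⟨l', x, rfl⟩
    · have hg1 : g = 1 := by simpa using hprod
      subst hg1
      rw [Set.mem_mul]
      exact ⟨1, by simp [mem_closedBall], 1, Or.inr rfl, by simp⟩
    · have hx : x ∈ (S : Set Γ) ∪ (S : Set Γ)⁻¹ ∪ {1} := by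
        rcases hl x (by simp) with h | h
        · exact Or.inl (Or.inl h)
        · exact Or.inl (Or.inr (Set.mem_inv.mpr h))
      have hl' : ∀ y ∈ l', y ∈ (S : Set Γ) ∨ y⁻¹ ∈ (S : Set Γ) := fun y hy =>
        hl y (by simp [hy])
      have hmem : l'.prod ∈ closedBall (1 : Γ) (n : ℝ) := by
        rw [mem_closedBall, dist_comm]
        refine le_trans (dist_one_prod_le hgen hdist hl') ?_
        have : l'.length ≤ n := by
          have := hlenle
          simp only [List.length_concat] at this
          omega
        exact_mod_cast this
      have : g = l'.prod * x := by rw [hprod]; simp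
      rw [this]
      exact Set.mul_mem_mul hmem hx

theorem ball_finite (r : ℝ) : (closedBall (1 : Γ) r).Finite :=
  (ball_finite_nat hgen hdist ⌈r⌉₊).subset
    (closedBall_subset_closedBall (Nat.le_ceil r))

theorem one_mem_ball {r : ℝ} (hr : 0 ≤ r) : (1 : Γ) ∈ closedBall (1 : Γ) r := by
  simp [mem_closedBall, hr]

theorem one_le_bc (n : ℕ) : 1 ≤ (closedBall (1 : Γ) (n : ℝ)).ncard :=
  (Set.ncard_pos (ball_finite_nat hgen hdist n)).mpr
    ⟨1, one_mem_ball hgen hdist (by positivity)⟩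

/-- subadditivity of ball cardinalities -/
theorem bc_subadd (m n : ℕ) :
    (closedBall (1 : Γ) ((m + n : ℕ) : ℝ)).ncard ≤
      (closedBall (1 : Γ) (m : ℝ)).ncard * (closedBall (1 : Γ) (n : ℝ)).ncard := by
  classical
  set L : Γ → List Γ := fun g => Classical.choose (exists_min_list_one hgen hdist g) with hL
  have hLspec : ∀ g : Γ, ((L g).length : ℝ) = dist (1 : Γ) g ∧
      (∀ x ∈ L g, x ∈ (S : Set Γ) ∨ x⁻¹ ∈ (S : Set Γ)) ∧ g = (L g).prod := fun g =>
    Classical.choose_spec (exists_min_list_one hgen hdist g)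
  apply ncard_le_mul (ball_finite_nat hgen hdist m) (ball_finite_nat hgen hdist n)
    (fun g => ((L g).take m).prod)
  · intro b hb
    obtain ⟨_, hgens, _⟩ := hLspec b
    rw [mem_closedBall, dist_comm]
    refine le_trans (dist_one_prod_le hgen hdist
      (fun x hx => hgens x (List.mem_of_mem_take hx))) ?_
    have : ((L b).take m).length ≤ m := by simp
    exact_mod_cast this
  · intro b hb
    obtain ⟨hlen, hgens, hprodb⟩ := hLspec b
    have key : ((L b).take m).prod⁻¹ * b = ((L b).drop m).prod := by
      nth_rewrite 2 [hprodb]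
      rw [← List.prod_take_mul_prod_drop (L b) m]
      group
    rw [mem_closedBall, dist_comm, key]
    refine le_trans (dist_one_prod_le hgen hdist
      (fun x hx => hgens x (List.mem_of_mem_drop hx))) ?_
    have hlb : (L b).length ≤ m + n := by
      have : ((L b).length : ℝ) ≤ ((m + n : ℕ) : ℝ) := by
        rw [hlen, dist_comm]; exact_mod_cast mem_closedBall.mp hb
      exact_mod_cast this
    have : ((L b).drop m).length ≤ n := by simp; omega
    exact_mod_cast this
end Balls

theorem elog_natCast (k : ℕ) : elog ((k : ℕ) : ℝ≥0∞) = ENNReal.ofReal (Real.log k) := by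
  rw [elog, if_neg (by simp)]
  simp

section Fekete
variable {Γ : Type*} [Group Γ] [MetricSpace Γ] {S : Finset Γ}
  (hgen : Subgroup.closure (S : Set Γ) = ⊤)
  (hdist : ∀ g h : Γ, dist g h = (wordDist (S : Set Γ) g h : ℝ))
set_option linter.unusedSectionVars false

/-- log of the cardinality of the ball of radius `l` -/
noncomputable def logBall (Γ : Type*) [Group Γ] [MetricSpace Γ] : ℕ → ℝ :=
  fun l => Real.log ((closedBall (1 : Γ) (l : ℝ)).ncard)

include hgen hdist

theorem logBall_nonneg (l : ℕ) : 0 ≤ logBall Γ l :=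
  Real.log_nonneg (by exact_mod_cast one_le_bc hgen hdist l)

theorem logBall_subadd : Subadditive (logBall Γ) := by
  intro m n
  unfold logBall
  have h1 : (0:ℝ) < ((closedBall (1 : Γ) ((m:ℕ) : ℝ)).ncard : ℝ) := by
    exact_mod_cast one_le_bc hgen hdist m
  have h2 : (0:ℝ) < ((closedBall (1 : Γ) ((n:ℕ) : ℝ)).ncard : ℝ) := by
    exact_mod_cast one_le_bc hgen hdist n
  have h3 : (0:ℝ) < ((closedBall (1 : Γ) (((m+n : ℕ)) : ℝ)).ncard : ℝ) := by
    exact_mod_cast one_le_bc hgen hdist (m+n)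
  rw [← Real.log_mul (ne_of_gt h1) (ne_of_gt h2)]
  apply Real.log_le_log h3
  push_cast [← Nat.cast_mul]
  exact_mod_cast bc_subadd hgen hdist m n

theorem logBall_bdd : BddBelow (Set.range fun n : ℕ => logBall Γ n / n) := by
  refine ⟨0, ?_⟩
  rintro _ ⟨n, rfl⟩
  have := logBall_nonneg hgen hdist n
  positivity

theorem growthC_nonneg : 0 ≤ (logBall_subadd hgen hdist).lim := by
  rw [Subadditive.lim]
  apply le_csInf ((Set.nonempty_Ici (a := 1)).image _)
  rintro _ ⟨n, hn, rfl⟩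
  have := logBall_nonneg hgen hdist n
  positivity

theorem tendsto_logBall :
    Filter.Tendsto (fun n : ℕ => logBall Γ n / n) atTop
      (nhds (logBall_subadd hgen hdist).lim) :=
  (logBall_subadd hgen hdist).tendsto_lim (logBall_bdd hgen hdist)

theorem encard_ball_eq (l : ℕ) :
    (((closedBall (1 : Γ) (l : ℝ)).encard : ℝ≥0∞)) =
      (((closedBall (1 : Γ) (l : ℝ)).ncard : ℕ) : ℝ≥0∞) := by
  have hfin := ball_finite_nat hgen hdist l
  rw [hfin.encard_eq_coe_toFinset_card, Set.ncard_eq_toFinset_card _ hfin]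
  simp

theorem limsup_growth_eq :
    Filter.atTop.limsup
        (fun l : ℕ => elog ((closedBall (1 : Γ) (l : ℝ)).encard : ℝ≥0∞) / (l : ℝ≥0∞)) =
      ENNReal.ofReal (logBall_subadd hgen hdist).lim := by
  have heq : ∀ᶠ l : ℕ in atTop,
      elog ((closedBall (1 : Γ) (l : ℝ)).encard : ℝ≥0∞) / (l : ℝ≥0∞) =
        ENNReal.ofReal (logBall Γ l / l) := by
    filter_upwards [Filter.eventually_ge_atTop 1] with l hl
    rw [encard_ball_eq hgen hdist, elog_natCast,
      ENNReal.ofReal_div_of_pos (by exact_mod_cast hl), ENNReal.ofReal_natCast]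
    rfl
  rw [Filter.limsup_congr heq]
  apply Filter.Tendsto.limsup_eq
  exact (ENNReal.continuous_ofReal.tendsto _).comp (tendsto_logBall hgen hdist)

end Fekete

section Encard
theorem encard_cast_eq {α : Type*} {s : Set α} (h : s.Finite) :
    ((s.encard : ℝ≥0∞)) = ((s.ncard : ℕ) : ℝ≥0∞) := by
  rw [h.encard_eq_coe_toFinset_card, Set.ncard_eq_toFinset_card _ h]
  simp
end Encard

section Paths
variable {Γ : Type*} [Group Γ] [MetricSpace Γ] {S : Finset Γ}
  (hgen : Subgroup.closure (S : Set Γ) = ⊤)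
  (hdist : ∀ g h : Γ, dist g h = (wordDist (S : Set Γ) g h : ℝ))
set_option linter.unusedSectionVars false

theorem le_orbitDist {X : Type*} [MetricSpace X] {n i : ℕ} (hi : i ≤ n) (p q : ℕ → X) :
    dist (p i) (q i) ≤ orbitDist n p q :=
  Finset.le_sup' (fun i => dist (p i) (q i)) (Finset.mem_range.mpr (Nat.lt_succ_of_le hi))

theorem orbitDist_le {X : Type*} [MetricSpace X] {n : ℕ} {M : ℝ} (p q : ℕ → X)
    (h : ∀ i ≤ n, dist (p i) (q i) ≤ M) : orbitDist n p q ≤ M :=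
  Finset.sup'_le _ _ fun i hi => h i (by simpa using Nat.lt_succ_iff.mp (Finset.mem_range.mp hi))

theorem pseudo_steps {X : Type*} [MetricSpace X] {δ : ℝ} {n : ℕ} {x₀ : X} {p : ℕ → X}
    (hp : IsPseudoOrbit id δ n x₀ p) :
    ∀ a j : ℕ, a + j ≤ n → dist (p a) (p (a + j)) ≤ j * δ := by
  intro a j
  induction j with
  | zero => simp
  | succ j ih =>
    intro hle
    have h1 : dist (p (a+j)) (p (a+j+1)) ≤ δ := by
      have := hp.2 (a+j) (by omega)
      simpa using this
    calc dist (p a) (p (a + (j+1))) ≤ dist (p a) (p (a+j)) + dist (p (a+j)) (p (a+j+1)) := by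
          rw [show a + (j+1) = a + j + 1 by omega]; exact dist_triangle _ _ _
    _ ≤ j * δ + δ := add_le_add (ih (by omega)) h1
    _ = ((j+1 : ℕ) : ℝ) * δ := by push_cast; ring
include hgen hdist

theorem dist_one_inv_mul (x y : Γ) : dist (1 : Γ) (x⁻¹ * y) = dist x y := by
  have := dist_mul_left' hgen hdist x 1 (x⁻¹ * y)
  simpa using this.symm

/-- maximal `R`-separated subsets are `R`-nets -/
theorem exists_net {B : Set Γ} (hB : B.Finite) {R : ℝ} (hR : 0 < R) :
    ∃ T ⊆ B, (∀ x ∈ T, ∀ y ∈ T, x ≠ y → R ≤ dist x y) ∧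
      B.ncard ≤ T.ncard * (closedBall (1 : Γ) ((⌈R⌉₊ : ℕ) : ℝ)).ncard := by
  classical
  set C : Set (Set Γ) := {T | T ⊆ B ∧ ∀ x ∈ T, ∀ y ∈ T, x ≠ y → R ≤ dist x y} with hC
  have hCfin : C.Finite := hB.finite_subsets.subset fun T hT => hT.1
  have hCne : C.Nonempty := ⟨∅, by simp [hC], by simp⟩
  obtain ⟨T, hTC, hTmax⟩ := Set.exists_max_image C Set.ncard hCfin hCne
  obtain ⟨hTB, hTsep⟩ := hTC
  have hTfin : T.Finite := hB.subset hTB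
  refine ⟨T, hTB, hTsep, ?_⟩
  have hnet : ∀ b ∈ B, ∃ t ∈ T, dist b t < R := by
    intro b hb
    by_contra hcon
    push_neg at hcon
    have hbT : b ∉ T := fun hbT => by
      have := hcon b hbT
      simp at this
      linarith
    have hins : insert b T ∈ C := by
      refine ⟨Set.insert_subset hb hTB, ?_⟩
      intro x hx y hy hxy
      rcases Set.mem_insert_iff.mp hx with hxb | hx
      · rcases Set.mem_insert_iff.mp hy with hyb | hy
        · exact absurd (hxb.trans hyb.symm) hxy
        · rw [hxb]; exact hcon y hy
      · rcases Set.mem_insert_iff.mp hy with hyb | hy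
        · rw [hyb, dist_comm]; exact hcon x hx
        · exact hTsep x hx y hy hxy
    have := hTmax _ hins
    rw [Set.ncard_insert_of_notMem hbT hTfin] at this
    omega
  choose! t ht hlt using hnet
  apply ncard_le_mul hTfin (ball_finite_nat hgen hdist _) t ht
  intro b hb
  rw [mem_closedBall, dist_comm, dist_one_inv_mul hgen hdist]
  have := (hlt b hb).le
  rw [dist_comm] at this
  exact this.trans (Nat.le_ceil R)

/-- any point of `B(1, n*k)` is the endpoint of a `k`-pseudo-orbit of length `n` -/
theorem exists_path {n k : ℕ} {g : Γ} (hg : g ∈ closedBall (1 : Γ) ((n * k : ℕ) : ℝ)) :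
    ∃ p : ℕ → Γ, IsPseudoOrbit id (k : ℝ) n 1 p ∧ p n = g := by
  obtain ⟨l, hlen, hgens, hprod⟩ := exists_min_list_one hgen hdist g
  have hlle : l.length ≤ n * k := by
    have : (l.length : ℝ) ≤ ((n * k : ℕ) : ℝ) := by
      rw [hlen, dist_comm]; exact_mod_cast mem_closedBall.mp hg
    exact_mod_cast this
  refine ⟨fun i => (l.take (i * k)).prod, ⟨by simp, ?_⟩, ?_⟩
  · intro i hi
    simp only [id]
    have htake : l.take ((i+1) * k) = l.take (i * k) ++ (l.drop (i * k)).take k := by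
      rw [show (i+1) * k = i * k + k by ring, List.take_add]
    rw [htake, List.prod_append]
    rw [show ∀ u w : Γ, u * w = u * w from fun _ _ => rfl]
    have : dist ((l.take (i*k)).prod) ((l.take (i*k)).prod * ((l.drop (i*k)).take k).prod)
        = dist (1 : Γ) (((l.drop (i*k)).take k).prod) := by
      rw [← dist_mul_left' hgen hdist ((l.take (i*k)).prod) 1]
      simp
    rw [this]
    refine le_trans (dist_one_prod_le hgen hdist fun x hx =>
      hgens x (List.mem_of_mem_drop (List.mem_of_mem_take hx))) ?_
    have : ((l.drop (i*k)).take k).length ≤ k := by simp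
    exact_mod_cast this
  · show (List.take (n * k) l).prod = g
    rw [List.take_of_length_le hlle]
    exact hprod.symm

end Paths

section SepBounds
variable {Γ : Type*} [Group Γ] [MetricSpace Γ] {S : Finset Γ}
  (hgen : Subgroup.closure (S : Set Γ) = ⊤)
  (hdist : ∀ g h : Γ, dist g h = (wordDist (S : Set Γ) g h : ℝ))
set_option linter.unusedSectionVars false
include hgen hdist

theorem sepCard_lower (k n : ℕ) {R : ℝ} (hR : 0 < R) :
    ((closedBall (1 : Γ) ((n * k : ℕ) : ℝ)).ncard : ℝ≥0∞) ≤
      sepCard (id : Γ → Γ) n R (k : ℝ) 1 *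
        ((closedBall (1 : Γ) ((⌈R⌉₊ : ℕ) : ℝ)).ncard : ℝ≥0∞) := by
  obtain ⟨T, hTB, hTsep, hcount⟩ :=
    exists_net hgen hdist (ball_finite_nat hgen hdist (n * k)) hR
  have hTfin : T.Finite := (ball_finite_nat hgen hdist (n * k)).subset hTB
  have hpath : ∀ g ∈ T, ∃ p, IsPseudoOrbit id (k : ℝ) n 1 p ∧ p n = g := fun g hg =>
    exists_path hgen hdist (hTB hg)
  choose! pa hpa hpan using hpath
  have hinj : Set.InjOn pa T := fun g hg g' hg' he => by
    rw [← hpan g hg, ← hpan g' hg', he]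
  have hsep : IsSepFamily n R (pa '' T) := by
    rintro _ ⟨g, hg, rfl⟩ _ ⟨g', hg', rfl⟩ hne
    have hgne : g ≠ g' := fun h => hne (by rw [h])
    calc R ≤ dist g g' := hTsep g hg g' hg' hgne
    _ = dist (pa g n) (pa g' n) := by rw [hpan g hg, hpan g' hg']
    _ ≤ orbitDist n (pa g) (pa g') := le_orbitDist le_rfl _ _
  have hpo : ∀ p ∈ pa '' T, IsPseudoOrbit id (k : ℝ) n 1 p := by
    rintro _ ⟨g, hg, rfl⟩; exact hpa g hg
  have hle : (((pa '' T).encard : ℝ≥0∞)) ≤ sepCard (id : Γ → Γ) n R (k : ℝ) 1 := by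
    refine le_iSup_of_le (pa '' T) ?_
    rw [iSup_pos hpo, iSup_pos hsep]
  calc ((closedBall (1 : Γ) ((n * k : ℕ) : ℝ)).ncard : ℝ≥0∞)
      ≤ ((T.ncard * (closedBall (1 : Γ) ((⌈R⌉₊ : ℕ) : ℝ)).ncard : ℕ) : ℝ≥0∞) := by
        exact_mod_cast hcount
  _ = (T.ncard : ℝ≥0∞) * ((closedBall (1 : Γ) ((⌈R⌉₊ : ℕ) : ℝ)).ncard : ℝ≥0∞) := by
        push_cast; ring
  _ = (((pa '' T).encard : ℝ≥0∞)) *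
        ((closedBall (1 : Γ) ((⌈R⌉₊ : ℕ) : ℝ)).ncard : ℝ≥0∞) := by
        rw [encard_cast_eq (hTfin.image _), Set.ncard_image_of_injOn hinj]
  _ ≤ _ := mul_le_mul_left hle _
end SepBounds

theorem elog_mono : Monotone elog := by
  intro x y hxy
  unfold elog
  split_ifs with hx hy hy
  · exact le_rfl
  · exact absurd (top_le_iff.mp (hx ▸ hxy)) hy
  · exact le_top
  · rcases eq_or_lt_of_le (ENNReal.toReal_nonneg (a := x)) with h0 | h0
    · rw [← h0, Real.log_zero]
      simp
    · exact ENNReal.ofReal_le_ofReal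
        (Real.log_le_log h0 (ENNReal.toReal_mono hy hxy))

section Lower
variable {Γ : Type*} [Group Γ] [MetricSpace Γ] {S : Finset Γ}
  (hgen : Subgroup.closure (S : Set Γ) = ⊤)
  (hdist : ∀ g h : Γ, dist g h = (wordDist (S : Set Γ) g h : ℝ))
set_option linter.unusedSectionVars false
include hgen hdist

theorem limsup_lower (k : ℕ) (hk : 1 ≤ k) {R : ℝ} (hR : 0 < R) :
    ENNReal.ofReal (k * (logBall_subadd hgen hdist).lim) ≤
      Filter.atTop.limsup
        (fun n : ℕ => elog (sepCard (id : Γ → Γ) n R (k : ℝ) 1) / (n : ℝ≥0∞)) := by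
  set c := (logBall_subadd hgen hdist).lim with hc
  set g : ℕ → ℝ≥0∞ := fun n =>
    ENNReal.ofReal ((logBall Γ (n * k) - logBall Γ ⌈R⌉₊) / n) with hg
  have hA : ∀ᶠ n : ℕ in atTop,
      g n ≤ elog (sepCard (id : Γ → Γ) n R (k : ℝ) 1) / (n : ℝ≥0∞) := by
    filter_upwards [Filter.eventually_ge_atTop 1] with n hn
    have hbR0 : ((closedBall (1 : Γ) ((⌈R⌉₊ : ℕ) : ℝ)).ncard : ℝ≥0∞) ≠ 0 := by
      have h := one_le_bc hgen hdist ⌈R⌉₊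
      exact_mod_cast Nat.one_le_iff_ne_zero.mp h
    have hbRtop : ((closedBall (1 : Γ) ((⌈R⌉₊ : ℕ) : ℝ)).ncard : ℝ≥0∞) ≠ ⊤ := by
      exact ENNReal.natCast_ne_top _
    have hdivle : ((closedBall (1 : Γ) ((n * k : ℕ) : ℝ)).ncard : ℝ≥0∞) /
        ((closedBall (1 : Γ) ((⌈R⌉₊ : ℕ) : ℝ)).ncard : ℝ≥0∞) ≤
        sepCard (id : Γ → Γ) n R (k : ℝ) 1 :=
      (ENNReal.div_le_iff hbR0 hbRtop).mpr (sepCard_lower hgen hdist k n hR)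
    have helogdiv : elog (((closedBall (1 : Γ) ((n * k : ℕ) : ℝ)).ncard : ℝ≥0∞) /
        ((closedBall (1 : Γ) ((⌈R⌉₊ : ℕ) : ℝ)).ncard : ℝ≥0∞)) =
        ENNReal.ofReal (logBall Γ (n * k) - logBall Γ ⌈R⌉₊) := by
      rw [elog, if_neg (by
        simp only [Ne, ENNReal.div_eq_top]
        push_neg
        exact ⟨fun _ => hbR0, fun h => absurd h (ENNReal.natCast_ne_top _)⟩)]
      rw [ENNReal.toReal_div]
      simp only [ENNReal.toReal_natCast]
      rw [Real.log_div (by exact_mod_cast Nat.one_le_iff_ne_zero.mp (one_le_bc hgen hdist (n*k)))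
        (by exact_mod_cast Nat.one_le_iff_ne_zero.mp (one_le_bc hgen hdist ⌈R⌉₊))]
      rfl
    calc g n = ENNReal.ofReal (logBall Γ (n * k) - logBall Γ ⌈R⌉₊) / (n : ℝ≥0∞) := by
          show ENNReal.ofReal ((logBall Γ (n * k) - logBall Γ ⌈R⌉₊) / n) = _
          rw [ENNReal.ofReal_div_of_pos (by exact_mod_cast hn), ENNReal.ofReal_natCast]
    _ ≤ elog (sepCard (id : Γ → Γ) n R (k : ℝ) 1) / (n : ℝ≥0∞) := by
          apply ENNReal.div_le_div_right
          rw [← helogdiv]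
          exact elog_mono hdivle
  have hB : Filter.Tendsto g atTop (nhds (ENNReal.ofReal (k * c))) := by
    have hmul : Filter.Tendsto (fun n : ℕ => n * k) atTop atTop := by
      apply Filter.tendsto_atTop_atTop.mpr
      intro b
      exact ⟨b, fun n hn => le_trans hn (Nat.le_mul_of_pos_right n (by omega))⟩
    have h1 : Filter.Tendsto (fun n : ℕ => logBall Γ (n * k) / ((n * k : ℕ) : ℝ)) atTop
        (nhds c) := (tendsto_logBall hgen hdist).comp hmul
    have h2 : Filter.Tendsto (fun n : ℕ => (logBall Γ ⌈R⌉₊) / (n : ℝ)) atTop (nhds 0) :=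
      tendsto_const_div_atTop_nhds_zero_nat _
    have h3 : Filter.Tendsto
        (fun n : ℕ => (logBall Γ (n * k) - logBall Γ ⌈R⌉₊) / n) atTop
        (nhds (k * c - 0)) := by
      apply Filter.Tendsto.congr' _ (((h1.const_mul (k : ℝ)).sub h2))
      filter_upwards [Filter.eventually_ge_atTop 1] with n hn
      have hn0 : (n : ℝ) ≠ 0 := by positivity
      have hk0 : (k : ℝ) ≠ 0 := by positivity
      push_cast
      field_simp
    rw [sub_zero] at h3
    exact (ENNReal.continuous_ofReal.tendsto _).comp h3
  calc ENNReal.ofReal (k * c) = Filter.atTop.limsup g := (hB.limsup_eq).symm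
  _ ≤ _ := Filter.limsup_le_limsup hA

theorem entropy_top (hc : 0 < (logBall_subadd hgen hdist).lim) :
    coarseEntropyAt (id : Γ → Γ) 1 = ⊤ := by
  set c := (logBall_subadd hgen hdist).lim with hc'
  apply ENNReal.eq_top_of_forall_nnreal_le
  intro r
  obtain ⟨k, hk⟩ := Archimedean.arch (r : ℝ) hc
  have hk1 : (r : ℝ) ≤ (k + 1 : ℕ) * c := by
    refine le_trans hk ?_
    calc k • c = (k : ℝ) * c := by rw [nsmul_eq_mul]
    _ ≤ (k + 1 : ℕ) * c := by
        apply mul_le_mul_of_nonneg_right _ hc.le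
        push_cast; linarith
  calc (r : ℝ≥0∞) = ENNReal.ofReal (r : ℝ) := by
        rw [ENNReal.ofReal_coe_nnreal]
  _ ≤ ENNReal.ofReal ((k + 1 : ℕ) * c) := ENNReal.ofReal_le_ofReal hk1
  _ ≤ ⨅ (R : ℝ) (_ : 0 < R),
        Filter.atTop.limsup
          (fun n : ℕ => elog (sepCard (id : Γ → Γ) n R ((k + 1 : ℕ) : ℝ) 1) / (n : ℝ≥0∞)) := by
        apply le_iInf; intro R; apply le_iInf; intro hR
        exact limsup_lower hgen hdist (k + 1) (by omega) hR
  _ ≤ coarseEntropyAt (id : Γ → Γ) 1 := by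
        refine le_iSup_of_le ((k + 1 : ℕ) : ℝ) ?_
        rw [iSup_pos (by positivity)]
end Lower

section Upper
variable {Γ : Type*} [Group Γ] [MetricSpace Γ] {S : Finset Γ}
  (hgen : Subgroup.closure (S : Set Γ) = ⊤)
  (hdist : ∀ g h : Γ, dist g h = (wordDist (S : Set Γ) g h : ℝ))
set_option linter.unusedSectionVars false
include hgen hdist

theorem sepCard_upper {δ : ℝ} (hδ : 0 < δ) (k : ℕ) (hk : 1 ≤ k) {R : ℝ}
    (hR : 2 * k * δ < R) (n : ℕ) :
    sepCard (id : Γ → Γ) n R δ 1 ≤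
      ((closedBall (1 : Γ) ((⌈k * δ⌉₊ : ℕ) : ℝ)).ncard : ℝ≥0∞) ^ (n / k + 1) := by
  classical
  set m := n / k + 1 with hm
  set r : ℕ := ⌈(k : ℝ) * δ⌉₊ with hr
  apply iSup_le; intro F; apply iSup_le; intro hpo; apply iSup_le; intro hsep
  set Φ : (ℕ → Γ) → (Fin m → Γ) :=
    fun p j => (p (min (j.1 * k) n))⁻¹ * p (min ((j.1 + 1) * k) n) with hΦdef
  set T : Set (Fin m → Γ) := Set.pi Set.univ (fun _ => closedBall (1 : Γ) (r : ℝ)) with hT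
  have hstep : ∀ p : ℕ → Γ, IsPseudoOrbit id δ n (1 : Γ) p → ∀ a b : ℕ, a ≤ b → b ≤ n → b - a ≤ k →
      dist (p a) (p b) ≤ (k : ℝ) * δ := by
    intro p hp a b hab hbn hbak
    have h1 := pseudo_steps hp a (b - a) (by omega)
    rw [Nat.add_sub_cancel' hab] at h1
    refine h1.trans ?_
    apply mul_le_mul_of_nonneg_right _ hδ.le
    exact_mod_cast hbak
  have himg : Φ '' F ⊆ T := by
    rintro _ ⟨p, hp, rfl⟩
    intro j _
    show Φ p j ∈ closedBall (1 : Γ) (r : ℝ)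
    rw [mem_closedBall, dist_comm, hΦdef]
    rw [dist_one_inv_mul hgen hdist]
    refine le_trans (hstep p (hpo p hp) _ _ ?_ ?_ ?_) ?_
    · exact min_le_min (mul_le_mul_left (Nat.le_succ _) k) le_rfl
    · exact min_le_right _ _
    · have h2 : (j.1 + 1) * k = j.1 * k + k := Nat.succ_mul _ _
      omega
    · exact Nat.le_ceil _
  have hinj : Set.InjOn Φ F := by
    intro p hp q hq he
    by_contra hne
    have hRle := hsep p hp q hq hne
    have hsub : ∀ j, j ≤ m → p (min (j * k) n) = q (min (j * k) n) := by
      intro j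
      induction j with
      | zero => intro _; simp [(hpo p hp).1, (hpo q hq).1]
      | succ j ih =>
        intro hj
        have hj' : j < m := by omega
        have hΦeq := congrFun he ⟨j, hj'⟩
        have hpq := ih (by omega)
        calc p (min ((j + 1) * k) n)
            = p (min (j * k) n) * Φ p ⟨j, hj'⟩ := by rw [hΦdef]; group
        _ = q (min (j * k) n) * Φ q ⟨j, hj'⟩ := by rw [hpq, hΦeq]
        _ = q (min ((j + 1) * k) n) := by rw [hΦdef]; group
    have hclose : ∀ i ≤ n, dist (p i) (q i) ≤ 2 * ((k : ℝ) * δ) := by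
      intro i hi
      set j := i / k with hj
      have hdm := Nat.div_add_mod i k
      have hmlt : i % k < k := Nat.mod_lt _ (by omega)
      have hjk' : j * k = k * (i / k) := by rw [hj, Nat.mul_comm]
      have hjk : j * k ≤ i := by omega
      have hsubk : i - j * k ≤ k := by omega
      have hjm : j ≤ m := by
        have : i / k ≤ n / k := Nat.div_le_div_right hi
        omega
      have hpj : p (j * k) = q (j * k) := by
        have := hsub j hjm
        rwa [min_eq_left (le_trans hjk hi)] at this
      calc dist (p i) (q i) ≤ dist (p i) (p (j * k)) + dist (p (j * k)) (q i) :=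
            dist_triangle _ _ _
      _ = dist (p (j * k)) (p i) + dist (q (j * k)) (q i) := by rw [dist_comm, hpj]
      _ ≤ (k : ℝ) * δ + (k : ℝ) * δ := add_le_add
            (hstep p (hpo p hp) _ _ hjk hi hsubk)
            (hstep q (hpo q hq) _ _ hjk hi hsubk)
      _ = 2 * ((k : ℝ) * δ) := by ring
    have : R ≤ 2 * ((k : ℝ) * δ) := hRle.trans (orbitDist_le p q hclose)
    linarith
  have hTfin : T.Finite := Set.Finite.pi (fun _ => ball_finite_nat hgen hdist r)
  have hFfin : F.Finite := Set.Finite.of_finite_image (hTfin.subset himg) hinj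
  have hTcard : T.ncard = (closedBall (1 : Γ) (r : ℝ)).ncard ^ m := by
    rw [← Nat.card_coe_set_eq,
      Nat.card_congr (Equiv.Set.univPi fun _ : Fin m => closedBall (1 : Γ) (r : ℝ)),
      Nat.card_pi]
    simp [Nat.card_coe_set_eq]
  have hcard : F.ncard ≤ (closedBall (1 : Γ) (r : ℝ)).ncard ^ m := by
    rw [← hTcard, ← Set.ncard_image_of_injOn hinj]
    exact Set.ncard_le_ncard himg hTfin
  calc (F.encard : ℝ≥0∞) = ((F.ncard : ℕ) : ℝ≥0∞) := encard_cast_eq hFfin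
  _ ≤ (((closedBall (1 : Γ) (r : ℝ)).ncard ^ m : ℕ) : ℝ≥0∞) := by exact_mod_cast hcard
  _ = ((closedBall (1 : Γ) (r : ℝ)).ncard : ℝ≥0∞) ^ m := by push_cast; rfl
end Upper

section Zero
variable {Γ : Type*} [Group Γ] [MetricSpace Γ] {S : Finset Γ}
  (hgen : Subgroup.closure (S : Set Γ) = ⊤)
  (hdist : ∀ g h : Γ, dist g h = (wordDist (S : Set Γ) g h : ℝ))
set_option linter.unusedSectionVars false
include hgen hdist

theorem entropy_zero (hc : (logBall_subadd hgen hdist).lim = 0) :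
    coarseEntropyAt (id : Γ → Γ) 1 = 0 := by
  rw [coarseEntropyAt]
  refine le_antisymm ?_ zero_le
  apply iSup_le; intro δ; apply iSup_le; intro hδ
  refine ENNReal.le_of_forall_pos_le_add ?_
  intro ε hε _
  set E : ℝ := (ε : ℝ) with hEdef
  have hE : 0 < E := hε
  have hceil : Filter.Tendsto (fun k : ℕ => ⌈(k : ℝ) * δ⌉₊) atTop atTop := by
    apply Filter.tendsto_atTop_atTop.mpr
    intro b
    refine ⟨⌈(b : ℝ) / δ⌉₊, fun x hx => ?_⟩
    have h1 : ((b : ℝ) / δ) ≤ (⌈(b : ℝ) / δ⌉₊ : ℝ) := Nat.le_ceil _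
    have h2 : ((⌈(b : ℝ) / δ⌉₊ : ℕ) : ℝ) ≤ (x : ℝ) := by exact_mod_cast hx
    have h3 : (b : ℝ) ≤ (x : ℝ) * δ := by
      rw [div_le_iff₀ hδ] at h1
      nlinarith
    have h4 : (b : ℝ) ≤ (⌈(x : ℝ) * δ⌉₊ : ℝ) := le_trans h3 (Nat.le_ceil _)
    exact_mod_cast h4
  have hten : Filter.Tendsto
      (fun k : ℕ => logBall Γ ⌈(k : ℝ) * δ⌉₊ / ((⌈(k : ℝ) * δ⌉₊ : ℕ) : ℝ)) atTop
      (nhds 0) := by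
    have h := tendsto_logBall hgen hdist
    rw [hc] at h
    exact h.comp hceil
  have hev := (hten.eventually_lt_const (show (0:ℝ) < E / (δ + 1) by positivity)).and
    (Filter.eventually_ge_atTop 1)
  obtain ⟨k, hklt, hk1⟩ := hev.exists
  set r : ℕ := ⌈(k : ℝ) * δ⌉₊ with hrdef
  set A : ℕ := (closedBall (1 : Γ) ((r : ℕ) : ℝ)).ncard with hAdef
  have hA1 : 1 ≤ A := one_le_bc hgen hdist r
  have hlogA : 0 ≤ Real.log A := Real.log_nonneg (by exact_mod_cast hA1)
  have hr1 : 1 ≤ r := by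
    rw [hrdef]
    rw [Nat.one_le_ceil_iff]
    have : (1:ℝ) ≤ (k:ℝ) := by exact_mod_cast hk1
    positivity
  set R : ℝ := 2 * (k : ℝ) * δ + 1 with hRdef
  have hR : 0 < R := by positivity
  refine le_trans (iInf_le_of_le R (iInf_le_of_le hR le_rfl)) ?_
  have hkey : ∀ᶠ n : ℕ in atTop,
      elog (sepCard (id : Γ → Γ) n R δ 1) / (n : ℝ≥0∞) ≤
        ENNReal.ofReal (Real.log A / k + Real.log A / n) := by
    filter_upwards [Filter.eventually_ge_atTop 1] with n hn
    have hsepb := sepCard_upper hgen hdist hδ k hk1 (show 2 * (k : ℝ) * δ < R by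
      rw [hRdef]; linarith) n
    have h1 : elog (sepCard (id : Γ → Γ) n R δ 1) ≤
        ENNReal.ofReal ((((n / k : ℕ)) + 1 : ℝ) * Real.log A) := by
      refine le_trans (elog_mono hsepb) ?_
      have hcast : ((A : ℝ≥0∞)) ^ (n / k + 1) = (((A ^ (n / k + 1) : ℕ)) : ℝ≥0∞) := by
        push_cast; rfl
      rw [hcast, elog_natCast]
      apply ENNReal.ofReal_le_ofReal
      rw [Nat.cast_pow, Real.log_pow]
      apply le_of_eq
      push_cast
      ring
    calc elog (sepCard (id : Γ → Γ) n R δ 1) / (n : ℝ≥0∞)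
        ≤ ENNReal.ofReal ((((n / k : ℕ)) + 1 : ℝ) * Real.log A) / (n : ℝ≥0∞) :=
          ENNReal.div_le_div_right h1 _
    _ = ENNReal.ofReal ((((n / k : ℕ)) + 1 : ℝ) * Real.log A / n) := by
          rw [ENNReal.ofReal_div_of_pos (by exact_mod_cast hn), ENNReal.ofReal_natCast]
    _ ≤ ENNReal.ofReal (Real.log A / k + Real.log A / n) := by
          apply ENNReal.ofReal_le_ofReal
          have h2 : (((n / k : ℕ)) : ℝ) ≤ (n : ℝ) / (k : ℝ) := Nat.cast_div_le
          have hn0 : (0:ℝ) < (n : ℝ) := by exact_mod_cast hn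
          have hk0 : (0:ℝ) < (k : ℝ) := by exact_mod_cast hk1
          calc (((n / k : ℕ)) + 1 : ℝ) * Real.log A / n
              ≤ ((n : ℝ) / (k : ℝ) + 1) * Real.log A / n := by gcongr
          _ = Real.log A / k + Real.log A / n := by field_simp
  have hlim : Filter.atTop.limsup
      (fun n : ℕ => elog (sepCard (id : Γ → Γ) n R δ 1) / (n : ℝ≥0∞)) ≤
        ENNReal.ofReal (Real.log A / k) := by
    refine le_trans (Filter.limsup_le_limsup hkey) ?_
    have ht : Filter.Tendsto
        (fun n : ℕ => ENNReal.ofReal (Real.log A / k + Real.log A / n)) atTop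
        (nhds (ENNReal.ofReal (Real.log A / k + 0))) :=
      (ENNReal.continuous_ofReal.tendsto _).comp
        (tendsto_const_nhds.add (tendsto_const_div_atTop_nhds_zero_nat _))
    rw [ht.limsup_eq, add_zero]
  refine hlim.trans ?_
  have hk0 : (0:ℝ) < (k : ℝ) := by exact_mod_cast hk1
  have hr0 : (0:ℝ) < (r : ℝ) := by exact_mod_cast hr1
  have hfinal : Real.log A / k ≤ E := by
    have h3 : Real.log A / k = ((r : ℝ) / k) * (Real.log A / r) := by
      field_simp
    have h4 : (r : ℝ) / k ≤ δ + 1 := by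
      rw [div_le_iff₀ hk0]
      have h5 : ((r : ℕ) : ℝ) < (k : ℝ) * δ + 1 := Nat.ceil_lt_add_one (by positivity)
      have h6 : (1:ℝ) ≤ (k:ℝ) := by exact_mod_cast hk1
      nlinarith
    have h5 : 0 ≤ Real.log A / r := by positivity
    calc Real.log A / k = ((r : ℝ) / k) * (Real.log A / r) := h3
    _ ≤ (δ + 1) * (Real.log A / r) := mul_le_mul_of_nonneg_right h4 h5
    _ ≤ (δ + 1) * (E / (δ + 1)) := mul_le_mul_of_nonneg_left hklt.le (by linarith)
    _ = E := by field_simp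
  calc ENNReal.ofReal (Real.log A / k) ≤ ENNReal.ofReal E := ENNReal.ofReal_le_ofReal hfinal
  _ = (ε : ℝ≥0∞) := ENNReal.ofReal_coe_nnreal
  _ = 0 + (ε : ℝ≥0∞) := (zero_add _).symm
end Zero

/-- A group `Γ` generated by a finite set `S`, equipped with the word
metric associated with `S`, has exponential growth (i.e.
`limsup_{l→∞} (1/l) log |B(e,l)| > 0`) if and only if its coarse entropy is infinite. -/
theorem exponentialGrowth_iff_coarseEntropy_top {Γ : Type*} [Group Γ] [MetricSpace Γ]
    (S : Finset Γ) (hgen : Subgroup.closure (S : Set Γ) = ⊤)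
    (hdist : ∀ g h : Γ, dist g h = (wordDist (S : Set Γ) g h : ℝ)) :
    (0 < Filter.atTop.limsup
        fun l : ℕ => elog ((Metric.closedBall (1 : Γ) (l : ℝ)).encard : ℝ≥0∞)
          / (l : ℝ≥0∞)) ↔
      coarseEntropyAt (id : Γ → Γ) 1 = ⊤ := by
  have hlim := limsup_growth_eq hgen hdist
  constructor
  · intro hpos
    rw [hlim] at hpos
    exact entropy_top hgen hdist (ENNReal.ofReal_pos.mp hpos)
  · intro htop
    rw [hlim, ENNReal.ofReal_pos]
    by_contra hneg
    push_neg at hneg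
    have hc0 : (logBall_subadd hgen hdist).lim = 0 :=
      le_antisymm hneg (growthC_nonneg hgen hdist)
    have hzero := entropy_zero hgen hdist hc0
    exact ENNReal.top_ne_zero (htop ▸ hzero)
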